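/- Let n, m, l ∈ ℝ³ be an orthonormal triple. Let A_ij be a smooth field on ℝ × ℝ³ of symmetric trace-free 3×3 matrices and κ a smooth scalar field on ℝ × ℝ³, satisfying the wave equations ∂_t∂_t A_ij = ΔA_ij and ∂_t∂_t κ = Δκ everywhere. Define A1,...,A5 pointwise by A1 = 2A_ij n_(i m_j), A2 = 2A_ij n_(i l_j), A3 = 2A_ij l_(i m_j), A4 = (1/2)A_ij(l_i l_j − m_i m_j), A5 = (1/6)A_ij(2n_i n_j − l_i l_j − m_i m_j), and let ∂_n f := n_i ∂_i f. Suppose the boundary conditions ∂_n A1 = 0, ∂_n A2 = 0, A3 = 0, A4 = 0, A5 = 0, κ = 0 hold at every point (t,x) with ⟨x, n⟩ = 0. Then, with M_i := ∂_l A_il − (2/3)∂_i κ, one has Σ_i (∂_n M_i)(∂_t M_i) = 0 at every point (t,x) with ⟨x, n⟩ = 0. -/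

import Mathlib

noncomputable section

/-- Spacetime ℝ × ℝ³. -/
abbrev Spc : Type := ℝ × (Fin 3 → ℝ)

/-- Time derivative ∂_t. -/
noncomputable def pt (f : Spc → ℝ) : Spc → ℝ :=
  fun p => deriv (fun s => f (s, p.2)) p.1

/-- Spatial partial derivative ∂_i. -/
noncomputable def ps (i : Fin 3) (f : Spc → ℝ) : Spc → ℝ :=
  fun p => deriv (fun s => f (p.1, Function.update p.2 i s)) (p.2 i)

/-- Spatial Laplacian Δ = Σ_i ∂_i ∂_i. -/
noncomputable def lap (f : Spc → ℝ) : Spc → ℝ :=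
  fun p => ∑ i : Fin 3, ps i (ps i f) p

/-- Kronecker delta δ_ij. -/
noncomputable def kron (i j : Fin 3) : ℝ := if i = j then 1 else 0

/-- Directional spatial derivative ∂_v f = v_i ∂_i f on spacetime. -/
noncomputable def dirD (v : Fin 3 → ℝ) (f : Spc → ℝ) : Spc → ℝ :=
  fun p => ∑ i, v i * ps i f p

/-- Symmetrized product v_(i w_j) = (1/2)(v_i w_j + v_j w_i). -/
def symp (v w : Fin 3 → ℝ) (i j : Fin 3) : ℝ := (1/2) * (v i * w j + v j * w i)

namespace BC

def et : Spc := (1, 0)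
def ev (i : Fin 3) : Spc := (0, Pi.single i 1)
def sv (v : Fin 3 → ℝ) : Spc := (0, v)

lemma line_hasDerivAt (p w : Spc) (s : ℝ) :
    HasDerivAt (fun s : ℝ => p + s • w) w s := by
  simpa using ((hasDerivAt_id s).smul_const w).const_add p

lemma fderiv_line {f : Spc → ℝ} {p : Spc} (hf : DifferentiableAt ℝ f p) (w : Spc) :
    HasDerivAt (fun s : ℝ => f (p + s • w)) (fderiv ℝ f p w) 0 := by
  have hF : HasFDerivAt f (fderiv ℝ f p) ((fun s : ℝ => p + s • w) 0) := by
    simpa using hf.hasFDerivAt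
  simpa [Function.comp_def] using hF.comp_hasDerivAt 0 (line_hasDerivAt p w 0)

lemma pt_eq {f : Spc → ℝ} {p : Spc} (hf : DifferentiableAt ℝ f p) :
    pt f p = fderiv ℝ f p et := by
  have hline : HasDerivAt (fun s : ℝ => p + (s - p.1) • et) et p.1 := by
    simpa using (((hasDerivAt_id p.1).sub_const p.1).smul_const et).const_add p
  have hpt : (fun s : ℝ => p + (s - p.1) • et) = fun s => (s, p.2) := by
    funext s
    ext <;> simp [et]
  rw [hpt] at hline
  have hF : HasFDerivAt f (fderiv ℝ f p) ((fun s : ℝ => (s, p.2)) p.1) := by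
    simpa using hf.hasFDerivAt
  have h := hF.comp_hasDerivAt p.1 hline
  simpa [pt, Function.comp_def] using h.deriv

lemma ps_eq {f : Spc → ℝ} {p : Spc} (hf : DifferentiableAt ℝ f p) (i : Fin 3) :
    ps i f p = fderiv ℝ f p (ev i) := by
  have hline : HasDerivAt (fun s : ℝ => p + (s - p.2 i) • ev i) (ev i) (p.2 i) := by
    simpa using (((hasDerivAt_id (p.2 i)).sub_const (p.2 i)).smul_const (ev i)).const_add p
  have hpt : (fun s : ℝ => p + (s - p.2 i) • ev i) = fun s => (p.1, Function.update p.2 i s) := by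
    funext s
    ext
    · simp [ev]
    · next j =>
      simp only [ev, Prod.snd_add, Prod.smul_snd, Pi.add_apply, Pi.smul_apply,
        Function.update_apply, Pi.single_apply, smul_eq_mul]
      by_cases h : j = i <;> simp [h]
  rw [hpt] at hline
  have hF : HasFDerivAt f (fderiv ℝ f p) ((fun s => (p.1, Function.update p.2 i s)) (p.2 i)) := by
    simpa using hf.hasFDerivAt
  have h := hF.comp_hasDerivAt (p.2 i) hline
  simpa [ps, Function.comp_def] using h.deriv

lemma single_sum (v : Fin 3 → ℝ) : ∑ i, v i • ev i = sv v := by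
  ext
  · simp [ev, sv, Prod.fst_sum]
  · next j =>
    simp [ev, sv, Prod.snd_sum, Pi.single_apply, Finset.sum_ite_eq]

lemma dirD_eq {f : Spc → ℝ} {p : Spc} (hf : DifferentiableAt ℝ f p) (v : Fin 3 → ℝ) :
    dirD v f p = fderiv ℝ f p (sv v) := by
  rw [← single_sum v, map_sum]
  simp only [map_smul, smul_eq_mul]
  unfold dirD
  exact Finset.sum_congr rfl fun i _ => by rw [ps_eq hf i]

lemma tangent_zero (n : Fin 3 → ℝ) {f : Spc → ℝ} (hf : Differentiable ℝ f)
    (h0 : ∀ p : Spc, (∑ i, p.2 i * n i) = 0 → f p = 0)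
    {w : Spc} (hw : (∑ i, w.2 i * n i) = 0)
    {p : Spc} (hp : (∑ i, p.2 i * n i) = 0) :
    fderiv ℝ f p w = 0 := by
  have hcurve : ∀ s : ℝ, f (p + s • w) = 0 := by
    intro s
    apply h0
    have : ∀ i, (p + s • w).2 i = p.2 i + s * w.2 i := fun i => rfl
    simp only [this, add_mul, Finset.sum_add_distrib, hp, mul_assoc, ← Finset.mul_sum, hw]
    ring
  have h := fderiv_line (hf p) w
  rw [show (fun s : ℝ => f (p + s • w)) = fun _ => (0:ℝ) from funext hcurve] at h
  have h2 := h.deriv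
  simpa using h2.symm

lemma diff_of_cd {f : Spc → ℝ} (hf : ContDiff ℝ (⊤ : ℕ∞) f) : Differentiable ℝ f :=
  hf.differentiable (by simp)

lemma contDiff_fderiv_apply {f : Spc → ℝ} (hf : ContDiff ℝ (⊤ : ℕ∞) f) (v : Spc) :
    ContDiff ℝ (⊤ : ℕ∞) (fun q => fderiv ℝ f q v) := by
  have h : ContDiff ℝ (⊤ : ℕ∞) (fderiv ℝ f) := hf.fderiv_right (by exact_mod_cast le_top)
  exact (ContinuousLinearMap.apply ℝ ℝ v).contDiff.comp h

lemma fderiv_fderiv_apply {f : Spc → ℝ} (hf : ContDiff ℝ (⊤ : ℕ∞) f) (p v w : Spc) :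
    fderiv ℝ (fun q => fderiv ℝ f q w) p v = fderiv ℝ (fderiv ℝ f) p v w := by
  have h : ContDiff ℝ (⊤ : ℕ∞) (fderiv ℝ f) := hf.fderiv_right (by exact_mod_cast le_top)
  have hd : DifferentiableAt ℝ (fderiv ℝ f) p := (h.differentiable (by simp)) p
  have := (ContinuousLinearMap.apply ℝ ℝ w).hasFDerivAt.comp p hd.hasFDerivAt
  simpa [Function.comp_def] using congrFun (congrArg DFunLike.coe this.fderiv) v

lemma symm2 {f : Spc → ℝ} (hf : ContDiff ℝ (⊤ : ℕ∞) f) (p v w : Spc) :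
    fderiv ℝ (fderiv ℝ f) p v w = fderiv ℝ (fderiv ℝ f) p w v := by
  have h : ContDiff ℝ (⊤ : ℕ∞) (fderiv ℝ f) := hf.fderiv_right (by exact_mod_cast le_top)
  have hd : DifferentiableAt ℝ (fderiv ℝ f) p := (h.differentiable (by simp)) p
  exact second_derivative_symmetric
    (fun y => ((hf.differentiable (by simp)) y).hasFDerivAt)
    hd.hasFDerivAt v w

lemma combo_hasFDeriv {ι : Type*} (s : Finset ι) (c : ι → ℝ) (f : ι → Spc → ℝ)
    (hf : ∀ k, Differentiable ℝ (f k)) (p : Spc) :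
    HasFDerivAt (fun q => ∑ k ∈ s, c k * f k q) (∑ k ∈ s, c k • fderiv ℝ (f k) p) p := by
  have h : ∀ k ∈ s, HasFDerivAt (fun q => c k * f k q) (c k • fderiv ℝ (f k) p) p := by
    intro k _
    exact (hf k p).hasFDerivAt.const_mul (c k)
  simpa using HasFDerivAt.fun_sum h

lemma combo_fderiv {ι : Type*} (s : Finset ι) (c : ι → ℝ) (f : ι → Spc → ℝ)
    (hf : ∀ k, Differentiable ℝ (f k)) (p v : Spc) :
    fderiv ℝ (fun q => ∑ k ∈ s, c k * f k q) p v = ∑ k ∈ s, c k * fderiv ℝ (f k) p v := by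
  rw [(combo_hasFDeriv s c f hf p).fderiv]
  simp [ContinuousLinearMap.sum_apply]

lemma combo_contDiff {ι : Type*} (s : Finset ι) (c : ι → ℝ) (f : ι → Spc → ℝ)
    (hf : ∀ k, ContDiff ℝ (⊤ : ℕ∞) (f k)) :
    ContDiff ℝ (⊤ : ℕ∞) (fun q => ∑ k ∈ s, c k * f k q) :=
  ContDiff.sum fun k _ => contDiff_const.mul (hf k)

lemma combo2_fderiv (c : Fin 3 → Fin 3 → ℝ) (f : Fin 3 → Fin 3 → Spc → ℝ)
    (hf : ∀ i j, Differentiable ℝ (f i j)) (p v : Spc) :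
    fderiv ℝ (fun q => ∑ i, ∑ j, c i j * f i j q) p v
      = ∑ i, ∑ j, c i j * fderiv ℝ (f i j) p v := by
  have h1 : (fun q : Spc => ∑ i, ∑ j, c i j * f i j q)
      = fun q => ∑ k : Fin 3 × Fin 3, (c k.1 k.2) * f k.1 k.2 q := by
    funext q; rw [← Finset.sum_product']; rfl
  rw [h1, combo_fderiv Finset.univ (fun k : Fin 3 × Fin 3 => c k.1 k.2)
    (fun k => f k.1 k.2) (fun k => hf k.1 k.2) p v, ← Finset.sum_product']
  rfl

lemma combo2_contDiff (c : Fin 3 → Fin 3 → ℝ) (f : Fin 3 → Fin 3 → Spc → ℝ)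
    (hf : ∀ i j, ContDiff ℝ (⊤ : ℕ∞) (f i j)) :
    ContDiff ℝ (⊤ : ℕ∞) (fun q => ∑ i, ∑ j, c i j * f i j q) := by
  have h1 : (fun q : Spc => ∑ i, ∑ j, c i j * f i j q)
      = fun q => ∑ k : Fin 3 × Fin 3, (c k.1 k.2) * f k.1 k.2 q := by
    funext q; rw [← Finset.sum_product']; rfl
  rw [h1]
  exact combo_contDiff Finset.univ _ _ (fun k => hf k.1 k.2)

lemma complete_pairing {n m l : Fin 3 → ℝ}
    (hD : ∀ i j, n i * n j + m i * m j + l i * l j = (if i = j then (1:ℝ) else 0))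
    (a b : Fin 3 → ℝ) :
    (∑ i, n i * a i) * (∑ i, n i * b i) + (∑ i, m i * a i) * (∑ i, m i * b i)
      + (∑ i, l i * a i) * (∑ i, l i * b i) = ∑ i, a i * b i := by
  have d00 : n 0 * n 0 + m 0 * m 0 + l 0 * l 0 = 1 := by simpa using hD 0 0
  have d11 : n 1 * n 1 + m 1 * m 1 + l 1 * l 1 = 1 := by simpa using hD 1 1
  have d22 : n 2 * n 2 + m 2 * m 2 + l 2 * l 2 = 1 := by simpa using hD 2 2
  have d01 : n 0 * n 1 + m 0 * m 1 + l 0 * l 1 = 0 := by simpa using hD 0 1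
  have d02 : n 0 * n 2 + m 0 * m 2 + l 0 * l 2 = 0 := by simpa using hD 0 2
  have d12 : n 1 * n 2 + m 1 * m 2 + l 1 * l 2 = 0 := by simpa using hD 1 2
  simp only [Fin.sum_univ_three]
  linear_combination (a 0 * b 0) * d00 + (a 1 * b 1) * d11 + (a 2 * b 2) * d22
    + (a 0 * b 1 + a 1 * b 0) * d01 + (a 0 * b 2 + a 2 * b 0) * d02
    + (a 1 * b 2 + a 2 * b 1) * d12

lemma ev_decomp {n m l : Fin 3 → ℝ}
    (hD : ∀ i j, n i * n j + m i * m j + l i * l j = (if i = j then (1:ℝ) else 0))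
    (a : Fin 3) : ev a = n a • sv n + m a • sv m + l a • sv l := by
  ext
  · simp [ev, sv]
  · next j =>
    have := hD a j
    simp only [ev, sv, Prod.snd_add, Prod.smul_snd, Pi.add_apply, Pi.smul_apply,
      Pi.single_apply, smul_eq_mul]
    rw [show (if j = a then (1:ℝ) else 0) = if a = j then 1 else 0 by simp [eq_comm], ← this]

lemma basis_sum {n m l : Fin 3 → ℝ}
    (hD : ∀ i j, n i * n j + m i * m j + l i * l j = (if i = j then (1:ℝ) else 0))
    (H : Spc →L[ℝ] Spc →L[ℝ] ℝ) :
    H (sv n) (sv n) + H (sv m) (sv m) + H (sv l) (sv l) = ∑ i, H (ev i) (ev i) := by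
  have hu : ∀ u w : Fin 3 → ℝ, H (sv u) (sv w) = ∑ i, ∑ j, u i * w j * H (ev i) (ev j) := by
    intro u w
    have h1 : ∀ i, (H (ev i)) (sv w) = ∑ j, w j * (H (ev i)) (ev j) := by
      intro i; rw [← single_sum w, map_sum]; simp [smul_eq_mul]
    rw [← single_sum u, map_sum, ContinuousLinearMap.sum_apply]
    refine Finset.sum_congr rfl fun i _ => ?_
    rw [map_smul, ContinuousLinearMap.smul_apply, h1, smul_eq_mul, Finset.mul_sum]
    exact Finset.sum_congr rfl fun j _ => by ring
  have d00 : n 0 * n 0 + m 0 * m 0 + l 0 * l 0 = 1 := by simpa using hD 0 0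
  have d11 : n 1 * n 1 + m 1 * m 1 + l 1 * l 1 = 1 := by simpa using hD 1 1
  have d22 : n 2 * n 2 + m 2 * m 2 + l 2 * l 2 = 1 := by simpa using hD 2 2
  have d01 : n 0 * n 1 + m 0 * m 1 + l 0 * l 1 = 0 := by simpa using hD 0 1
  have d02 : n 0 * n 2 + m 0 * m 2 + l 0 * l 2 = 0 := by simpa using hD 0 2
  have d12 : n 1 * n 2 + m 1 * m 2 + l 1 * l 2 = 0 := by simpa using hD 1 2
  rw [hu n n, hu m m, hu l l]
  simp only [Fin.sum_univ_three]
  linear_combination (H (ev 0) (ev 0)) * d00 + (H (ev 1) (ev 1)) * d11 + (H (ev 2) (ev 2)) * d22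
    + (H (ev 0) (ev 1) + H (ev 1) (ev 0)) * d01
    + (H (ev 0) (ev 2) + H (ev 2) (ev 0)) * d02
    + (H (ev 1) (ev 2) + H (ev 2) (ev 1)) * d12

/-- second time derivative in fderiv form -/
lemma ptpt_eq {f : Spc → ℝ} (hf : ContDiff ℝ (⊤ : ℕ∞) f) (p : Spc) :
    pt (pt f) p = fderiv ℝ (fun q => fderiv ℝ f q et) p et := by
  have h1 : pt f = fun q => fderiv ℝ f q et := funext fun q => pt_eq (diff_of_cd hf q)
  rw [h1]
  exact pt_eq ((diff_of_cd (contDiff_fderiv_apply hf et)) p)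

/-- Laplacian in fderiv form -/
lemma lap_eq {f : Spc → ℝ} (hf : ContDiff ℝ (⊤ : ℕ∞) f) (p : Spc) :
    lap f p = ∑ i, fderiv ℝ (fun q => fderiv ℝ f q (ev i)) p (ev i) := by
  unfold lap
  refine Finset.sum_congr rfl fun i _ => ?_
  have h1 : ps i f = fun q => fderiv ℝ f q (ev i) := funext fun q => ps_eq (diff_of_cd hf q) i
  rw [h1]
  exact ps_eq ((diff_of_cd (contDiff_fderiv_apply hf (ev i))) p) i

/-- key vanishing: second normal derivative of a wave-solution vanishing on the plane -/
lemma normal2_zero {n m l : Fin 3 → ℝ}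
    (hD : ∀ i j, n i * n j + m i * m j + l i * l j = (if i = j then (1:ℝ) else 0))
    (hmn : (∑ i, m i * n i) = 0) (hln : (∑ i, l i * n i) = 0)
    {f : Spc → ℝ} (hf : ContDiff ℝ (⊤ : ℕ∞) f)
    (hwave : ∀ q, pt (pt f) q = lap f q)
    (h0 : ∀ q : Spc, (∑ i, q.2 i * n i) = 0 → f q = 0)
    {p : Spc} (hp : (∑ i, p.2 i * n i) = 0) :
    fderiv ℝ (fun q => fderiv ℝ f q (sv n)) p (sv n) = 0 := by
  set H := fderiv ℝ (fderiv ℝ f) p with hH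
  have hDH : ∀ v w, fderiv ℝ (fun q => fderiv ℝ f q w) p v = H v w :=
    fun v w => fderiv_fderiv_apply hf p v w
  -- tangential double derivatives vanish
  have tang2 : ∀ w : Spc, (∑ i, w.2 i * n i) = 0 → H w w = 0 := by
    intro w hw
    rw [← hDH w w]
    refine tangent_zero n (diff_of_cd (contDiff_fderiv_apply hf w)) ?_ hw hp
    intro q hq
    exact tangent_zero n (diff_of_cd hf) h0 hw hq
  -- wave equation in H form
  have hw : H et et = ∑ i, H (ev i) (ev i) := by
    rw [← hDH et et]
    have h2 : ∀ i, fderiv ℝ (fun q => fderiv ℝ f q (ev i)) p (ev i) = H (ev i) (ev i) :=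
      fun i => hDH (ev i) (ev i)
    rw [← ptpt_eq hf p, hwave p, lap_eq hf p]
    exact Finset.sum_congr rfl fun i _ => h2 i
  have hb := basis_sum hD H
  rw [hDH (sv n) (sv n)]
  have h0et : H et et = 0 := tang2 et (by simp [et])
  have h0m : H (sv m) (sv m) = 0 := tang2 (sv m) (by simpa [sv] using hmn)
  have h0l : H (sv l) (sv l) = 0 := tang2 (sv l) (by simpa [sv] using hln)
  rw [← hw, h0et, h0m, h0l] at hb
  linarith

end BC

open BC

/-- Under the boundary conditions `∂_n A1 = ∂_n A2 = 0`, `A3 = A4 = A5 = 0`,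
`κ = 0` on the plane `⟨x,n⟩ = 0`, the momentum constraint quantity satisfies
`Σ_i (∂_n M_i)(∂_t M_i) = 0` on that plane. -/
theorem boundary_condition_set_two_preserves_constraints
    (n m l : Fin 3 → ℝ)
    (hn : ∑ i, n i * n i = 1) (hm : ∑ i, m i * m i = 1) (hl : ∑ i, l i * l i = 1)
    (hnm : ∑ i, n i * m i = 0) (hnl : ∑ i, n i * l i = 0) (hml : ∑ i, m i * l i = 0)
    (A : Fin 3 → Fin 3 → Spc → ℝ) (κ : Spc → ℝ)
    (hA : ∀ i j, ContDiff ℝ (⊤ : ℕ∞) (A i j)) (hκ : ContDiff ℝ (⊤ : ℕ∞) κ)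
    (hAsym : ∀ i j, A i j = A j i) (hAtr : ∀ p, ∑ i, A i i p = 0)
    (waveA : ∀ i j p, pt (pt (A i j)) p = lap (A i j) p)
    (waveκ : ∀ p, pt (pt κ) p = lap κ p)
    (A1 A2 A3 A4 A5 : Spc → ℝ)
    (hA1 : A1 = fun p => 2 * ∑ i, ∑ j, A i j p * symp n m i j)
    (hA2 : A2 = fun p => 2 * ∑ i, ∑ j, A i j p * symp n l i j)
    (hA3 : A3 = fun p => 2 * ∑ i, ∑ j, A i j p * symp l m i j)
    (hA4 : A4 = fun p => (1/2) * ∑ i, ∑ j, A i j p * (l i * l j - m i * m j))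
    (hA5 : A5 = fun p => (1/6) * ∑ i, ∑ j, A i j p * (2 * n i * n j - l i * l j - m i * m j))
    (bc1 : ∀ p : Spc, (∑ i, p.2 i * n i) = 0 → dirD n A1 p = 0)
    (bc2 : ∀ p : Spc, (∑ i, p.2 i * n i) = 0 → dirD n A2 p = 0)
    (bc3 : ∀ p : Spc, (∑ i, p.2 i * n i) = 0 → A3 p = 0)
    (bc4 : ∀ p : Spc, (∑ i, p.2 i * n i) = 0 → A4 p = 0)
    (bc5 : ∀ p : Spc, (∑ i, p.2 i * n i) = 0 → A5 p = 0)
    (bc6 : ∀ p : Spc, (∑ i, p.2 i * n i) = 0 → κ p = 0)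
    (M : Fin 3 → Spc → ℝ)
    (hM : ∀ i, M i = fun p => (∑ a, ps a (A i a) p) - (2/3) * ps i κ p) :
    ∀ p : Spc, (∑ i, p.2 i * n i) = 0 →
      (∑ i, dirD n (M i) p * pt (M i) p) = 0 := by
  classical
  -- completeness relation
  have hD : ∀ i j, n i * n j + m i * m j + l i * l j = (if i = j then (1:ℝ) else 0) := by
    have hn' := hn; have hm' := hm; have hl' := hl
    have hnm' := hnm; have hnl' := hnl; have hml' := hml
    simp only [Fin.sum_univ_three] at hn' hm' hl' hnm' hnl' hml'
    set B : Matrix (Fin 3) (Fin 3) ℝ := Matrix.of ![n, m, l] with hB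
    have h1 : B * Matrix.transpose B = 1 := by
      ext i j
      fin_cases i <;> fin_cases j <;>
        · simp only [Matrix.mul_apply, Matrix.transpose_apply, Matrix.one_apply, hB,
            Fin.sum_univ_three, Matrix.of_apply, Matrix.cons_val', Matrix.cons_val_zero,
            Matrix.cons_val_one, Matrix.head_cons, Matrix.cons_val_two, Matrix.tail_cons,
            Matrix.empty_val', Matrix.cons_val_fin_one, Matrix.head_fin_const]
          norm_num [Fin.ext_iff]
          first
          | linear_combination hn' | linear_combination hm' | linear_combination hl'
          | linear_combination hnm' | linear_combination hnl' | linear_combination hml'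
          | skip
    have h2 : Matrix.transpose B * B = 1 := mul_eq_one_comm.mp h1
    intro i j
    have h3 := congrFun (congrFun h2 i) j
    simp only [Matrix.mul_apply, Matrix.transpose_apply, Matrix.one_apply, hB,
      Fin.sum_univ_three, Matrix.of_apply, Matrix.cons_val_zero, Matrix.cons_val_one,
      Matrix.head_cons, Matrix.cons_val_two, Matrix.tail_cons] at h3
    rw [← h3]
  have hmn : (∑ i, m i * n i) = 0 := by
    rw [← hnm]; exact Finset.sum_congr rfl fun i _ => mul_comm _ _
  have hln : (∑ i, l i * n i) = 0 := by
    rw [← hnl]; exact Finset.sum_congr rfl fun i _ => mul_comm _ _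
  have hsvm : (∑ i, (sv m).2 i * n i) = 0 := by simpa [sv] using hmn
  have hsvl : (∑ i, (sv l).2 i * n i) = 0 := by simpa [sv] using hln
  have hsvet : (∑ i, (et : Spc).2 i * n i) = 0 := by simp [et]
  -- differentiability
  have hAd : ∀ i j, Differentiable ℝ (A i j) := fun i j => diff_of_cd (hA i j)
  have hκd : Differentiable ℝ κ := diff_of_cd hκ
  -- combo representations of A1..A5
  have c1 : A1 = fun q => ∑ i, ∑ j, (2 * symp n m i j) * A i j q := by
    rw [hA1]; funext q; rw [Finset.mul_sum]
    refine Finset.sum_congr rfl fun i _ => ?_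
    rw [Finset.mul_sum]
    exact Finset.sum_congr rfl fun j _ => by ring
  have c2 : A2 = fun q => ∑ i, ∑ j, (2 * symp n l i j) * A i j q := by
    rw [hA2]; funext q; rw [Finset.mul_sum]
    refine Finset.sum_congr rfl fun i _ => ?_
    rw [Finset.mul_sum]
    exact Finset.sum_congr rfl fun j _ => by ring
  have c3 : A3 = fun q => ∑ i, ∑ j, (2 * symp l m i j) * A i j q := by
    rw [hA3]; funext q; rw [Finset.mul_sum]
    refine Finset.sum_congr rfl fun i _ => ?_
    rw [Finset.mul_sum]
    exact Finset.sum_congr rfl fun j _ => by ring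
  have c4 : A4 = fun q => ∑ i, ∑ j, ((1/2) * (l i * l j - m i * m j)) * A i j q := by
    rw [hA4]; funext q; rw [Finset.mul_sum]
    refine Finset.sum_congr rfl fun i _ => ?_
    rw [Finset.mul_sum]
    exact Finset.sum_congr rfl fun j _ => by ring
  have c5 : A5 = fun q => ∑ i, ∑ j, ((1/6) * (2 * n i * n j - l i * l j - m i * m j)) * A i j q := by
    rw [hA5]; funext q; rw [Finset.mul_sum]
    refine Finset.sum_congr rfl fun i _ => ?_
    rw [Finset.mul_sum]
    exact Finset.sum_congr rfl fun j _ => by ring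
  have sA1 : ContDiff ℝ (⊤ : ℕ∞) A1 := by rw [c1]; exact combo2_contDiff _ _ hA
  have sA2 : ContDiff ℝ (⊤ : ℕ∞) A2 := by rw [c2]; exact combo2_contDiff _ _ hA
  have sA3 : ContDiff ℝ (⊤ : ℕ∞) A3 := by rw [c3]; exact combo2_contDiff _ _ hA
  have sA4 : ContDiff ℝ (⊤ : ℕ∞) A4 := by rw [c4]; exact combo2_contDiff _ _ hA
  have sA5 : ContDiff ℝ (⊤ : ℕ∞) A5 := by rw [c5]; exact combo2_contDiff _ _ hA
  have dA1 : Differentiable ℝ A1 := diff_of_cd sA1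
  have dA2 : Differentiable ℝ A2 := diff_of_cd sA2
  have dA3 : Differentiable ℝ A3 := diff_of_cd sA3
  have dA4 : Differentiable ℝ A4 := diff_of_cd sA4
  have dA5 : Differentiable ℝ A5 := diff_of_cd sA5
  -- M representation and smoothness
  have hMrep : ∀ i, M i = fun q => (∑ a, fderiv ℝ (A i a) q (ev a)) - (2/3) * fderiv ℝ κ q (ev i) := by
    intro i; rw [hM i]; funext q
    congr 1
    · exact Finset.sum_congr rfl fun a _ => ps_eq (hAd i a q) a
    · rw [ps_eq (hκd q) i]
  have hMs : ∀ i, ContDiff ℝ (⊤ : ℕ∞) (M i) := by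
    intro i; rw [hMrep i]
    exact (ContDiff.sum fun a _ => contDiff_fderiv_apply (hA i a) _).sub
      (contDiff_const.mul (contDiff_fderiv_apply hκ _))
  have hMd : ∀ i, Differentiable ℝ (M i) := fun i => diff_of_cd (hMs i)
  -- P representation
  have P_rep : ∀ (u : Fin 3 → ℝ) (q : Spc), (∑ i, u i * M i q)
      = fderiv ℝ (fun r => ∑ i, ∑ a, u i * n a * A i a r) q (sv n)
      + fderiv ℝ (fun r => ∑ i, ∑ a, u i * m a * A i a r) q (sv m)
      + fderiv ℝ (fun r => ∑ i, ∑ a, u i * l a * A i a r) q (sv l)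
      - (2/3) * fderiv ℝ κ q (sv u) := by
    intro u q
    have e1 : ∀ i ∈ Finset.univ, u i * M i q
        = (∑ a, u i * fderiv ℝ (A i a) q (ev a)) - (2/3) * (u i * fderiv ℝ κ q (ev i)) := by
      intro i _
      rw [hMrep i]
      simp only [mul_sub, Finset.mul_sum]
      ring
    rw [Finset.sum_congr rfl e1, Finset.sum_sub_distrib]
    have eκ : (∑ i, (2/3) * (u i * fderiv ℝ κ q (ev i))) = (2/3) * fderiv ℝ κ q (sv u) := by
      rw [← single_sum u, map_sum, Finset.mul_sum]
      exact Finset.sum_congr rfl fun i _ => by rw [map_smul, smul_eq_mul]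
    have gd : ∀ a, Differentiable ℝ (fun r : Spc => ∑ i, u i * A i a r) := fun a =>
      diff_of_cd (combo_contDiff Finset.univ u (fun i => A i a) (fun i => hA i a))
    have eA : (∑ i, ∑ a, u i * fderiv ℝ (A i a) q (ev a))
        = fderiv ℝ (fun r => ∑ i, ∑ a, u i * n a * A i a r) q (sv n)
        + fderiv ℝ (fun r => ∑ i, ∑ a, u i * m a * A i a r) q (sv m)
        + fderiv ℝ (fun r => ∑ i, ∑ a, u i * l a * A i a r) q (sv l) := by
      have swap : (∑ i, ∑ a, u i * fderiv ℝ (A i a) q (ev a))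
          = ∑ a, fderiv ℝ (fun r => ∑ i, u i * A i a r) q (ev a) := by
        rw [Finset.sum_comm]
        exact Finset.sum_congr rfl fun a _ =>
          (combo_fderiv Finset.univ u (fun i => A i a) (fun i => hAd i a) q (ev a)).symm
      have dec : ∀ a ∈ Finset.univ, fderiv ℝ (fun r => ∑ i, u i * A i a r) q (ev a)
          = n a * fderiv ℝ (fun r => ∑ i, u i * A i a r) q (sv n)
          + m a * fderiv ℝ (fun r => ∑ i, u i * A i a r) q (sv m)
          + l a * fderiv ℝ (fun r => ∑ i, u i * A i a r) q (sv l) := by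
        intro a _
        rw [ev_decomp hD a]
        simp only [map_add, map_smul, smul_eq_mul]
      have piece : ∀ (w : Fin 3 → ℝ) (d : Spc),
          (∑ a, w a * fderiv ℝ (fun r => ∑ i, u i * A i a r) q d)
          = fderiv ℝ (fun r => ∑ i, ∑ a, u i * w a * A i a r) q d := by
        intro w d
        rw [← combo_fderiv Finset.univ w (fun a => fun r => ∑ i, u i * A i a r) gd q d]
        have hfe : (fun r : Spc => ∑ a, w a * ∑ i, u i * A i a r)
            = fun r => ∑ i, ∑ a, u i * w a * A i a r := by
          funext r
          rw [show (∑ a, w a * ∑ i, u i * A i a r) = ∑ a, ∑ i, w a * (u i * A i a r) from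
            Finset.sum_congr rfl fun a _ => Finset.mul_sum _ _ _, Finset.sum_comm]
          exact Finset.sum_congr rfl fun i _ => Finset.sum_congr rfl fun a _ => by ring
        rw [hfe]
      rw [swap, Finset.sum_congr rfl dec, Finset.sum_add_distrib, Finset.sum_add_distrib,
        piece n (sv n), piece m (sv m), piece l (sv l)]
    rw [eκ, eA]
  -- pointwise symmetry facts
  have hs : ∀ (i j : Fin 3) (r : Spc), A i j r = A j i r := fun i j r => congrFun (hAsym i j) r
  have d00 : n 0 * n 0 + m 0 * m 0 + l 0 * l 0 = 1 := by simpa using hD 0 0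
  have d11 : n 1 * n 1 + m 1 * m 1 + l 1 * l 1 = 1 := by simpa using hD 1 1
  have d22 : n 2 * n 2 + m 2 * m 2 + l 2 * l 2 = 1 := by simpa using hD 2 2
  have d01 : n 0 * n 1 + m 0 * m 1 + l 0 * l 1 = 0 := by simpa using hD 0 1
  have d02 : n 0 * n 2 + m 0 * m 2 + l 0 * l 2 = 0 := by simpa using hD 0 2
  have d12 : n 1 * n 2 + m 1 * m 2 + l 1 * l 2 = 0 := by simpa using hD 1 2
  have htr : ∀ r : Spc, A 0 0 r + A 1 1 r + A 2 2 r = 0 := fun r => by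
    simpa [Fin.sum_univ_three] using hAtr r
  -- the nine scalar identities
  have id_mn : (fun r : Spc => ∑ i, ∑ a, m i * n a * A i a r) = fun r => (1/2) * A1 r := by
    funext r
    simp only [hA1, symp, Fin.sum_univ_three]
    linear_combination (m 0 * n 1 - (1/2) * (n 0 * m 1 + n 1 * m 0)) * hs 0 1 r
      + (m 0 * n 2 - (1/2) * (n 0 * m 2 + n 2 * m 0)) * hs 0 2 r
      + (m 1 * n 2 - (1/2) * (n 1 * m 2 + n 2 * m 1)) * hs 1 2 r
  have id_nm : (fun r : Spc => ∑ i, ∑ a, n i * m a * A i a r) = fun r => (1/2) * A1 r := by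
    funext r
    simp only [hA1, symp, Fin.sum_univ_three]
    linear_combination ((n 0 * m 1 - n 1 * m 0)/2) * hs 0 1 r
      + ((n 0 * m 2 - n 2 * m 0)/2) * hs 0 2 r
      + ((n 1 * m 2 - n 2 * m 1)/2) * hs 1 2 r
  have id_nl : (fun r : Spc => ∑ i, ∑ a, n i * l a * A i a r) = fun r => (1/2) * A2 r := by
    funext r
    simp only [hA2, symp, Fin.sum_univ_three]
    linear_combination ((n 0 * l 1 - n 1 * l 0)/2) * hs 0 1 r
      + ((n 0 * l 2 - n 2 * l 0)/2) * hs 0 2 r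
      + ((n 1 * l 2 - n 2 * l 1)/2) * hs 1 2 r
  have id_ln : (fun r : Spc => ∑ i, ∑ a, l i * n a * A i a r) = fun r => (1/2) * A2 r := by
    funext r
    simp only [hA2, symp, Fin.sum_univ_three]
    linear_combination (l 0 * n 1 - (1/2) * (n 0 * l 1 + n 1 * l 0)) * hs 0 1 r
      + (l 0 * n 2 - (1/2) * (n 0 * l 2 + n 2 * l 0)) * hs 0 2 r
      + (l 1 * n 2 - (1/2) * (n 1 * l 2 + n 2 * l 1)) * hs 1 2 r
  have id_ml : (fun r : Spc => ∑ i, ∑ a, m i * l a * A i a r) = fun r => (1/2) * A3 r := by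
    funext r
    simp only [hA3, symp, Fin.sum_univ_three]
    linear_combination (m 0 * l 1 - (1/2) * (l 0 * m 1 + l 1 * m 0)) * hs 0 1 r
      + (m 0 * l 2 - (1/2) * (l 0 * m 2 + l 2 * m 0)) * hs 0 2 r
      + (m 1 * l 2 - (1/2) * (l 1 * m 2 + l 2 * m 1)) * hs 1 2 r
  have id_lm : (fun r : Spc => ∑ i, ∑ a, l i * m a * A i a r) = fun r => (1/2) * A3 r := by
    funext r
    simp only [hA3, symp, Fin.sum_univ_three]
    linear_combination ((l 0 * m 1 - l 1 * m 0)/2) * hs 0 1 r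
      + ((l 0 * m 2 - l 2 * m 0)/2) * hs 0 2 r
      + ((l 1 * m 2 - l 2 * m 1)/2) * hs 1 2 r
  have id_mm : (fun r : Spc => ∑ i, ∑ a, m i * m a * A i a r) = fun r => -A4 r - A5 r := by
    funext r
    simp only [hA4, hA5, Fin.sum_univ_three]
    linear_combination (1/3) * htr r + (1/3) * (A 0 0 r) * d00 + (1/3) * (A 1 1 r) * d11
      + (1/3) * (A 2 2 r) * d22 + (1/3) * (A 0 1 r + A 1 0 r) * d01
      + (1/3) * (A 0 2 r + A 2 0 r) * d02 + (1/3) * (A 1 2 r + A 2 1 r) * d12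
  have id_ll : (fun r : Spc => ∑ i, ∑ a, l i * l a * A i a r) = fun r => A4 r - A5 r := by
    funext r
    simp only [hA4, hA5, Fin.sum_univ_three]
    linear_combination (1/3) * htr r + (1/3) * (A 0 0 r) * d00 + (1/3) * (A 1 1 r) * d11
      + (1/3) * (A 2 2 r) * d22 + (1/3) * (A 0 1 r + A 1 0 r) * d01
      + (1/3) * (A 0 2 r + A 2 0 r) * d02 + (1/3) * (A 1 2 r + A 2 1 r) * d12
  have id_nn : (fun r : Spc => ∑ i, ∑ a, n i * n a * A i a r) = fun r => 2 * A5 r := by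
    funext r
    simp only [hA5, Fin.sum_univ_three]
    linear_combination (1/3) * htr r + (1/3) * (A 0 0 r) * d00 + (1/3) * (A 1 1 r) * d11
      + (1/3) * (A 2 2 r) * d22 + (1/3) * (A 0 1 r + A 1 0 r) * d01
      + (1/3) * (A 0 2 r + A 2 0 r) * d02 + (1/3) * (A 1 2 r + A 2 1 r) * d12
  -- vanishing of tangential components of M on the plane
  intro p hp
  have hPm0 : ∀ q : Spc, (∑ i, q.2 i * n i) = 0 → (∑ i, m i * M i q) = 0 := by
    intro q hq
    have t0 : ∀ (f : Spc → ℝ), ContDiff ℝ (⊤ : ℕ∞) f →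
        (∀ r : Spc, (∑ i, r.2 i * n i) = 0 → f r = 0) →
        ∀ w : Spc, (∑ i, w.2 i * n i) = 0 → fderiv ℝ f q w = 0 := fun f hf h0 w hw =>
      tangent_zero n (diff_of_cd hf) h0 hw hq
    rw [P_rep m q, id_mn, id_mm, id_ml]
    have vA1n : fderiv ℝ A1 q (sv n) = 0 := by rw [← dirD_eq (dA1 q) n]; exact bc1 q hq
    have e1 : fderiv ℝ (fun r => (1/2) * A1 r) q (sv n) = 0 := by
      rw [((dA1 q).hasFDerivAt.const_mul ((1:ℝ)/2)).fderiv]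
      simp [vA1n]
    have e2 : fderiv ℝ (fun r => -A4 r - A5 r) q (sv m) = 0 := by
      rw [show (fun r => -A4 r - A5 r) = -A4 - A5 from rfl, ((dA4 q).hasFDerivAt.neg.sub (dA5 q).hasFDerivAt).fderiv]
      simp [t0 A4 sA4 bc4 (sv m) hsvm, t0 A5 sA5 bc5 (sv m) hsvm]
    have e3 : fderiv ℝ (fun r => (1/2) * A3 r) q (sv l) = 0 := by
      rw [((dA3 q).hasFDerivAt.const_mul ((1:ℝ)/2)).fderiv]
      simp [t0 A3 sA3 bc3 (sv l) hsvl]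
    rw [e1, e2, e3, t0 κ hκ bc6 (sv m) hsvm]
    ring
  have hPl0 : ∀ q : Spc, (∑ i, q.2 i * n i) = 0 → (∑ i, l i * M i q) = 0 := by
    intro q hq
    have t0 : ∀ (f : Spc → ℝ), ContDiff ℝ (⊤ : ℕ∞) f →
        (∀ r : Spc, (∑ i, r.2 i * n i) = 0 → f r = 0) →
        ∀ w : Spc, (∑ i, w.2 i * n i) = 0 → fderiv ℝ f q w = 0 := fun f hf h0 w hw =>
      tangent_zero n (diff_of_cd hf) h0 hw hq
    rw [P_rep l q, id_ln, id_lm, id_ll]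
    have vA2n : fderiv ℝ A2 q (sv n) = 0 := by rw [← dirD_eq (dA2 q) n]; exact bc2 q hq
    have e1 : fderiv ℝ (fun r => (1/2) * A2 r) q (sv n) = 0 := by
      rw [((dA2 q).hasFDerivAt.const_mul ((1:ℝ)/2)).fderiv]
      simp [vA2n]
    have e2 : fderiv ℝ (fun r => (1/2) * A3 r) q (sv m) = 0 := by
      rw [((dA3 q).hasFDerivAt.const_mul ((1:ℝ)/2)).fderiv]
      simp [t0 A3 sA3 bc3 (sv m) hsvm]
    have e3 : fderiv ℝ (fun r => A4 r - A5 r) q (sv l) = 0 := by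
      rw [show (fun r => A4 r - A5 r) = A4 - A5 from rfl, ((dA4 q).hasFDerivAt.sub (dA5 q).hasFDerivAt).fderiv]
      simp [t0 A4 sA4 bc4 (sv l) hsvl, t0 A5 sA5 bc5 (sv l) hsvl]
    rw [e1, e2, e3, t0 κ hκ bc6 (sv l) hsvl]
    ring
  have hPmd : Differentiable ℝ (fun q => ∑ i, m i * M i q) :=
    diff_of_cd (combo_contDiff Finset.univ m M hMs)
  have hPld : Differentiable ℝ (fun q => ∑ i, l i * M i q) :=
    diff_of_cd (combo_contDiff Finset.univ l M hMs)
  have fPm_et : fderiv ℝ (fun q => ∑ i, m i * M i q) p et = 0 :=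
    tangent_zero n hPmd hPm0 hsvet hp
  have fPl_et : fderiv ℝ (fun q => ∑ i, l i * M i q) p et = 0 :=
    tangent_zero n hPld hPl0 hsvet hp
  -- wave equation for A5
  have waveA5 : ∀ q, pt (pt A5) q = lap A5 q := by
    intro q
    rw [ptpt_eq sA5 q, lap_eq sA5 q]
    have key : ∀ v w : Spc, fderiv ℝ (fun r => fderiv ℝ A5 r w) q v
        = ∑ i, ∑ j, ((1/6) * (2 * n i * n j - l i * l j - m i * m j))
            * fderiv ℝ (fun r => fderiv ℝ (A i j) r w) q v := by
      intro v w
      have h1 : (fun r => fderiv ℝ A5 r w)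
          = fun r => ∑ i, ∑ j, ((1/6) * (2 * n i * n j - l i * l j - m i * m j))
              * fderiv ℝ (A i j) r w := by
        funext r; rw [c5]; exact combo2_fderiv _ _ hAd r w
      rw [h1]
      exact combo2_fderiv _ _ (fun i j => diff_of_cd (contDiff_fderiv_apply (hA i j) w)) q v
    rw [key et et,
      show (∑ a, fderiv ℝ (fun r => fderiv ℝ A5 r (ev a)) q (ev a))
        = ∑ a, ∑ i, ∑ j, ((1/6) * (2 * n i * n j - l i * l j - m i * m j))
            * fderiv ℝ (fun r => fderiv ℝ (A i j) r (ev a)) q (ev a) from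
        Finset.sum_congr rfl fun a _ => key (ev a) (ev a)]
    have wv : ∀ i ∈ Finset.univ, ∀ j ∈ Finset.univ,
        ((1/6) * (2 * n i * n j - l i * l j - m i * m j))
            * fderiv ℝ (fun r => fderiv ℝ (A i j) r et) q et
        = ∑ a, ((1/6) * (2 * n i * n j - l i * l j - m i * m j))
            * fderiv ℝ (fun r => fderiv ℝ (A i j) r (ev a)) q (ev a) := by
      intro i _ j _
      rw [← Finset.mul_sum]
      congr 1
      rw [← ptpt_eq (hA i j) q, ← lap_eq (hA i j) q]
      exact waveA i j q
    rw [Finset.sum_congr rfl fun i hi => Finset.sum_congr rfl (wv i hi)]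
    rw [Finset.sum_congr rfl fun i (_ : i ∈ Finset.univ) =>
      (Finset.sum_comm : (∑ j, ∑ a, ((1/6) * (2 * n i * n j - l i * l j - m i * m j))
            * fderiv ℝ (fun r => fderiv ℝ (A i j) r (ev a)) q (ev a)) = _)]
    exact Finset.sum_comm
  -- second normal derivatives vanish
  have n2A5 : fderiv ℝ (fun q => fderiv ℝ A5 q (sv n)) p (sv n) = 0 :=
    normal2_zero hD hmn hln sA5 waveA5 bc5 hp
  have n2κ : fderiv ℝ (fun q => fderiv ℝ κ q (sv n)) p (sv n) = 0 :=
    normal2_zero hD hmn hln hκ waveκ bc6 hp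
  -- mixed derivatives vanish by symmetry of second derivatives
  have cross1 : fderiv ℝ (fun q => fderiv ℝ A1 q (sv m)) p (sv n) = 0 := by
    rw [fderiv_fderiv_apply sA1 p (sv n) (sv m), symm2 sA1 p (sv n) (sv m),
        ← fderiv_fderiv_apply sA1 p (sv m) (sv n)]
    refine tangent_zero n (diff_of_cd (contDiff_fderiv_apply sA1 (sv n))) ?_ hsvm hp
    intro q hq
    rw [← dirD_eq (dA1 q) n]
    exact bc1 q hq
  have cross2 : fderiv ℝ (fun q => fderiv ℝ A2 q (sv l)) p (sv n) = 0 := by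
    rw [fderiv_fderiv_apply sA2 p (sv n) (sv l), symm2 sA2 p (sv n) (sv l),
        ← fderiv_fderiv_apply sA2 p (sv l) (sv n)]
    refine tangent_zero n (diff_of_cd (contDiff_fderiv_apply sA2 (sv n))) ?_ hsvl hp
    intro q hq
    rw [← dirD_eq (dA2 q) n]
    exact bc2 q hq
  -- normal derivative of normal component of M vanishes
  have hPn_rep : (fun q => ∑ i, n i * M i q)
      = fun q => 2 * fderiv ℝ A5 q (sv n) + (1/2) * fderiv ℝ A1 q (sv m)
        + (1/2) * fderiv ℝ A2 q (sv l) - (2/3) * fderiv ℝ κ q (sv n) := by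
    funext q
    rw [P_rep n q, id_nn, id_nm, id_nl]
    have e1 : fderiv ℝ (fun r => 2 * A5 r) q (sv n) = 2 * fderiv ℝ A5 q (sv n) := by
      rw [((dA5 q).hasFDerivAt.const_mul (2:ℝ)).fderiv]; simp
    have e2 : fderiv ℝ (fun r => (1/2) * A1 r) q (sv m) = (1/2) * fderiv ℝ A1 q (sv m) := by
      rw [((dA1 q).hasFDerivAt.const_mul ((1:ℝ)/2)).fderiv]; simp
    have e3 : fderiv ℝ (fun r => (1/2) * A2 r) q (sv l) = (1/2) * fderiv ℝ A2 q (sv l) := by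
      rw [((dA2 q).hasFDerivAt.const_mul ((1:ℝ)/2)).fderiv]; simp
    rw [e1, e2, e3]
  have fPn_svn : fderiv ℝ (fun q => ∑ i, n i * M i q) p (sv n) = 0 := by
    rw [hPn_rep]
    have g1 : Differentiable ℝ (fun q => fderiv ℝ A5 q (sv n)) :=
      diff_of_cd (contDiff_fderiv_apply sA5 _)
    have g2 : Differentiable ℝ (fun q => fderiv ℝ A1 q (sv m)) :=
      diff_of_cd (contDiff_fderiv_apply sA1 _)
    have g3 : Differentiable ℝ (fun q => fderiv ℝ A2 q (sv l)) :=
      diff_of_cd (contDiff_fderiv_apply sA2 _)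
    have g4 : Differentiable ℝ (fun q => fderiv ℝ κ q (sv n)) :=
      diff_of_cd (contDiff_fderiv_apply hκ _)
    have h : HasFDerivAt (fun q => 2 * fderiv ℝ A5 q (sv n) + (1/2) * fderiv ℝ A1 q (sv m)
        + (1/2) * fderiv ℝ A2 q (sv l) - (2/3) * fderiv ℝ κ q (sv n))
        ((2:ℝ) • fderiv ℝ (fun q => fderiv ℝ A5 q (sv n)) p
          + ((1:ℝ)/2) • fderiv ℝ (fun q => fderiv ℝ A1 q (sv m)) p
          + ((1:ℝ)/2) • fderiv ℝ (fun q => fderiv ℝ A2 q (sv l)) p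
          - ((2:ℝ)/3) • fderiv ℝ (fun q => fderiv ℝ κ q (sv n)) p) p :=
      ((((g1 p).hasFDerivAt.const_mul (2:ℝ)).add
        ((g2 p).hasFDerivAt.const_mul ((1:ℝ)/2))).add
        ((g3 p).hasFDerivAt.const_mul ((1:ℝ)/2))).sub
        ((g4 p).hasFDerivAt.const_mul ((2:ℝ)/3))
    rw [h.fderiv]
    simp only [ContinuousLinearMap.sub_apply, ContinuousLinearMap.add_apply,
      ContinuousLinearMap.smul_apply, smul_eq_mul]
    rw [n2A5, cross1, cross2, n2κ]
    ring
  -- final assembly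
  have lhs_eq : (∑ i, dirD n (M i) p * pt (M i) p)
      = ∑ i, fderiv ℝ (M i) p (sv n) * fderiv ℝ (M i) p et :=
    Finset.sum_congr rfl fun i _ => by rw [dirD_eq (hMd i p) n, pt_eq (hMd i p)]
  have key : (∑ i, n i * fderiv ℝ (M i) p (sv n)) * (∑ i, n i * fderiv ℝ (M i) p et)
      + (∑ i, m i * fderiv ℝ (M i) p (sv n)) * (∑ i, m i * fderiv ℝ (M i) p et)
      + (∑ i, l i * fderiv ℝ (M i) p (sv n)) * (∑ i, l i * fderiv ℝ (M i) p et)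
      = ∑ i, fderiv ℝ (M i) p (sv n) * fderiv ℝ (M i) p et :=
    complete_pairing hD _ _
  rw [lhs_eq, ← key,
    ← combo_fderiv Finset.univ n M hMd p (sv n), ← combo_fderiv Finset.univ n M hMd p et,
    ← combo_fderiv Finset.univ m M hMd p (sv n), ← combo_fderiv Finset.univ m M hMd p et,
    ← combo_fderiv Finset.univ l M hMd p (sv n), ← combo_fderiv Finset.univ l M hMd p et,
    fPn_svn, fPm_et, fPl_et]
  ring
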